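/- Let W be a finite subgroup of GLₙ(ℂ) and let f₁, …, fₙ ∈ ℂ[x₁,…,xₙ] be algebraically independent homogeneous polynomials, of degrees d₁, …, dₙ, that generate the algebra ℂ[x₁,…,xₙ]^W of W-invariant polynomials. Then the map v ↦ (f₂(v),…,fₙ(v)) induces a bijection from the quotient Z(f₁)/W of {v ∈ ℂⁿ∖{0} : f₁(v) = 0} by the action of W and of scalar multiplication, onto the weighted projective space ℙ(d₂,…,dₙ). Concretely: (i) for v ≠ 0 with f₁(v) = 0, not all of f₂(v),…,fₙ(v) vanish; (ii) for nonzero u, v with f₁(u) = f₁(v) = 0, there exists t ∈ ℂ* with fᵢ(u) = t^{dᵢ}·fᵢ(v) for all i ≥ 2 iff u = s·(g·v) for some g ∈ W, s ∈ ℂ*; (iii) every (x₂,…,xₙ) ∈ ℂⁿ⁻¹∖{0} equals (t^{d₂}f₂(v),…,t^{dₙ}fₙ(v)) for some t ∈ ℂ* and some v ≠ 0 with f₁(v) = 0. -/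

import Mathlib

noncomputable section
open MvPolynomial Matrix

variable {n : ℕ}

def substM (M : Matrix (Fin n) (Fin n) ℂ) :
    MvPolynomial (Fin n) ℂ →ₐ[ℂ] MvPolynomial (Fin n) ℂ :=
  aeval (fun i => ∑ j, C (M i j) * X j)

lemma aeval_eq_eval' (v : Fin n → ℂ) (p : MvPolynomial (Fin n) ℂ) :
    aeval v p = eval v p := by
  rw [← coe_aeval_eq_eval]; rfl

lemma eval_substM (M : Matrix (Fin n) (Fin n) ℂ) (v : Fin n → ℂ)
    (p : MvPolynomial (Fin n) ℂ) : eval v (substM M p) = eval (M.mulVec v) p := by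
  rw [← aeval_eq_eval', substM, comp_aeval_apply, ← aeval_eq_eval']
  have h : (fun i => (aeval v) (∑ j : Fin n, C (M i j) * X j)) = M.mulVec v := by
    funext i; simp [Matrix.mulVec, dotProduct]
  rw [h]

lemma substM_substM (M N : Matrix (Fin n) (Fin n) ℂ) (p : MvPolynomial (Fin n) ℂ) :
    substM M (substM N p) = substM (N * M) p := by
  rw [substM, substM, comp_aeval_apply]
  have h : (fun i => (aeval fun i => ∑ j : Fin n, C (M i j) * X j)
        (∑ j : Fin n, C (N i j) * X j))
      = (fun i => ∑ j, C ((N * M) i j) * X j) := by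
    funext i
    simp only [map_sum, _root_.map_mul, aeval_C, aeval_X, algebraMap_eq,
      Finset.mul_sum, Matrix.mul_apply, Finset.sum_mul, map_sum, mul_assoc]
    rw [Finset.sum_comm]
  rw [h]; rfl

lemma substM_one (p : MvPolynomial (Fin n) ℂ) : substM 1 p = p := by
  have : substM (1 : Matrix (Fin n) (Fin n) ℂ) = AlgHom.id ℂ _ := by
    rw [substM]
    ext i
    simp [Matrix.one_apply, ite_smul]
  rw [this]; rfl


lemma eval_aeval' (u : Fin n → ℂ) (f : Fin n → MvPolynomial (Fin n) ℂ)
    (q : MvPolynomial (Fin n) ℂ) :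
    eval u (aeval f q) = eval (fun i => eval u (f i)) q := by
  rw [← aeval_eq_eval', comp_aeval_apply, ← aeval_eq_eval']
  have : (fun i => (aeval u) (f i)) = fun i => eval u (f i) := by
    funext i; rw [aeval_eq_eval']
  rw [this]


lemma eval_smul_hom {p : MvPolynomial (Fin n) ℂ} {k : ℕ} (hp : p.IsHomogeneous k)
    (s : ℂ) (v : Fin n → ℂ) : eval (s • v) p = s ^ k * eval v p := by
  rw [eval_eq, eval_eq, Finset.mul_sum]
  apply Finset.sum_congr rfl
  intro m hm
  have hdeg : m.degree = k := by
    have := hp (mem_support_iff.mp hm)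
    rwa [Finsupp.degree_eq_weight_one]
  simp only [Pi.smul_apply, smul_eq_mul, mul_pow, Finset.prod_mul_distrib]
  rw [Finset.prod_pow_eq_pow_sum]
  rw [show ∑ i ∈ m.support, m i = k from hdeg]
  ring


lemma interp (S : Finset (Fin n → ℂ)) (p : Fin n → ℂ) (hp : p ∉ S) :
    ∃ q : MvPolynomial (Fin n) ℂ, eval p q = 1 ∧ ∀ w ∈ S, eval w q = 0 := by
  have hex : ∀ w ∈ S, ∃ j, p j ≠ w j := by
    intro w hw
    by_contra hc
    push_neg at hc
    exact hp (by rwa [show p = w from funext hc] at hp ⊢)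
  choose j hj using hex
  refine ⟨∏ w ∈ S.attach, (C (p (j w w.2) - w.1 (j w w.2))⁻¹ *
      (X (j w w.2) - C (w.1 (j w w.2)))), ?_, ?_⟩
  · rw [map_prod]
    apply Finset.prod_eq_one
    intro w _
    simp only [_root_.map_mul, map_sub, eval_C, eval_X]
    exact inv_mul_cancel₀ (sub_ne_zero.mpr (hj w w.2))
  · intro w hw
    rw [map_prod]
    apply Finset.prod_eq_zero (Finset.mem_attach _ ⟨w, hw⟩)
    simp

lemma sep [NeZero n] (W : Subgroup (GL (Fin n) ℂ)) (hW : Finite W)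
    (f : Fin n → MvPolynomial (Fin n) ℂ)
    (hgen : ∀ p : MvPolynomial (Fin n) ℂ,
      (∀ g ∈ W, ∀ v : Fin n → ℂ,
        MvPolynomial.eval ((g : Matrix (Fin n) (Fin n) ℂ).mulVec v) p
          = MvPolynomial.eval v p) →
      p ∈ Algebra.adjoin ℂ (Set.range f))
    (u v : Fin n → ℂ) (h : ∀ i, eval u (f i) = eval v (f i)) :
    ∃ g ∈ W, u = ((g : GL (Fin n) ℂ) : Matrix (Fin n) (Fin n) ℂ).mulVec v := by
  by_contra hcon
  push_neg at hcon
  haveI : Fintype W := Fintype.ofFinite _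
  set mat : W → Matrix (Fin n) (Fin n) ℂ := fun g => ((g : GL (Fin n) ℂ) : _) with hmat
  have hmat_mul : ∀ g g' : W, mat g * mat g' = mat (g * g') := fun g g' => rfl
  have hmat_one : mat 1 = 1 := rfl
  set Ou : Finset (Fin n → ℂ) := Finset.image (fun g : W => (mat g).mulVec u) Finset.univ with hOu
  set Ov : Finset (Fin n → ℂ) := Finset.image (fun g : W => (mat g).mulVec v) Finset.univ with hOv
  have hdisj : ∀ w ∈ Ou, w ∉ Ov := by
    intro w hwu hwv
    rw [hOu, Finset.mem_image] at hwu
    rw [hOv, Finset.mem_image] at hwv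
    obtain ⟨g, -, hg⟩ := hwu
    obtain ⟨g', -, hg'⟩ := hwv
    have : u = (mat (g⁻¹ * g')).mulVec v := by
      rw [← hmat_mul, ← Matrix.mulVec_mulVec]
      rw [hg', ← hg, Matrix.mulVec_mulVec, hmat_mul, inv_mul_cancel, hmat_one,
        Matrix.one_mulVec]
    exact hcon (↑(g⁻¹ * g')) (g⁻¹ * g').2 this
  -- interpolation polynomial: 1 on Ou, 0 on Ov
  have hstep : ∀ w ∈ Ou, ∃ q : MvPolynomial (Fin n) ℂ,
      eval w q = 1 ∧ ∀ w' ∈ (Ou ∪ Ov).erase w, eval w' q = 0 := by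
    intro w hw
    exact interp _ w (Finset.notMem_erase w _)
  choose q hq1 hq0 using hstep
  set h0 : MvPolynomial (Fin n) ℂ := ∑ w ∈ Ou.attach, q w.1 w.2 with hh0
  have hval : ∀ w, (w ∈ Ou → eval w h0 = 1) ∧ (w ∈ Ov → eval w h0 = 0) := by
    intro w
    constructor
    · intro hw
      rw [hh0, map_sum, Finset.sum_eq_single_of_mem ⟨w, hw⟩ (Finset.mem_attach _ _)]
      · exact hq1 w hw
      · intro b _ hb
        apply hq0 b.1 b.2
        rw [Finset.mem_erase]
        exact ⟨fun hc => hb (Subtype.ext hc.symm), Finset.mem_union_left _ hw⟩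
    · intro hw
      rw [hh0, map_sum]
      apply Finset.sum_eq_zero
      intro b _
      apply hq0 b.1 b.2
      rw [Finset.mem_erase]
      exact ⟨fun hc => hdisj b.1 b.2 (hc ▸ hw), Finset.mem_union_right _ hw⟩
  set H : MvPolynomial (Fin n) ℂ :=
    C ((Fintype.card W : ℂ))⁻¹ * ∑ g : W, substM (mat g) h0 with hH
  have hevalH : ∀ x : Fin n → ℂ, eval x H
      = (Fintype.card W : ℂ)⁻¹ * ∑ g : W, eval ((mat g).mulVec x) h0 := by
    intro x
    rw [hH, _root_.map_mul, eval_C, map_sum]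
    congr 1
    exact Finset.sum_congr rfl fun g _ => eval_substM _ _ _
  have hHinv : ∀ g ∈ W, ∀ x : Fin n → ℂ,
      eval ((g : Matrix (Fin n) (Fin n) ℂ).mulVec x) H = eval x H := by
    intro g hg x
    rw [hevalH, hevalH]
    congr 1
    rw [← Equiv.sum_comp (Equiv.mulRight (⟨g, hg⟩ : W)) (fun g' : W => eval ((mat g').mulVec x) h0)]
    apply Finset.sum_congr rfl
    intro g' _
    simp only [Equiv.coe_mulRight]
    rw [← hmat_mul, ← Matrix.mulVec_mulVec]
  have hmem := hgen H hHinv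
  rw [Algebra.adjoin_range_eq_range_aeval] at hmem
  obtain ⟨p, hp⟩ := hmem
  have hsame : eval u H = eval v H := by
    have h1 : eval u H = eval (fun i => eval u (f i)) p := by rw [← hp]; exact eval_aeval' _ _ _
    have h2 : eval v H = eval (fun i => eval v (f i)) p := by rw [← hp]; exact eval_aeval' _ _ _
    rw [h1, h2, show (fun i => eval u (f i)) = (fun i => eval v (f i)) from funext h]
  have hu : eval u H = 1 := by
    rw [hevalH]
    have : ∀ g : W, eval ((mat g).mulVec u) h0 = 1 := fun g =>
      (hval _).1 (Finset.mem_image.mpr ⟨g, Finset.mem_univ _, rfl⟩)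
    rw [Finset.sum_congr rfl fun g _ => this g, Finset.sum_const, Finset.card_univ,
      nsmul_eq_mul, mul_one]
    apply inv_mul_cancel₀
    exact_mod_cast Fintype.card_ne_zero
  have hv : eval v H = 0 := by
    rw [hevalH]
    have : ∀ g : W, eval ((mat g).mulVec v) h0 = 0 := fun g =>
      (hval _).2 (Finset.mem_image.mpr ⟨g, Finset.mem_univ _, rfl⟩)
    rw [Finset.sum_congr rfl fun g _ => this g, Finset.sum_const]
    simp
  rw [hsame, hv] at hu
  exact one_ne_zero hu.symm

lemma surj_eval [NeZero n] (W : Subgroup (GL (Fin n) ℂ)) (hW : Finite W)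
    (f : Fin n → MvPolynomial (Fin n) ℂ)
    (halg : AlgebraicIndependent ℂ f)
    (hgen : ∀ p : MvPolynomial (Fin n) ℂ,
      (∀ g ∈ W, ∀ v : Fin n → ℂ,
        MvPolynomial.eval ((g : Matrix (Fin n) (Fin n) ℂ).mulVec v) p
          = MvPolynomial.eval v p) →
      p ∈ Algebra.adjoin ℂ (Set.range f))
    (y : Fin n → ℂ) : ∃ v : Fin n → ℂ, ∀ i, eval v (f i) = y i := by
  haveI : Fintype W := Fintype.ofFinite _
  set mat : W → Matrix (Fin n) (Fin n) ℂ := fun g => ((g : GL (Fin n) ℂ) : _) with hmat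
  have hmat_mul : ∀ g g' : W, mat g * mat g' = mat (g * g') := fun g g' => rfl
  have hmat_one : mat 1 = 1 := rfl
  set ψ : MvPolynomial (Fin n) ℂ →ₐ[ℂ] MvPolynomial (Fin n) ℂ := aeval f with hψ
  have hinj : Function.Injective ψ := halg
  set B : Subalgebra ℂ (MvPolynomial (Fin n) ℂ) := ψ.range with hB
  have hrange : Algebra.adjoin ℂ (Set.range f) = B := Algebra.adjoin_range_eq_range_aeval ℂ f
  -- integrality
  have key : ∀ p : MvPolynomial (Fin n) ℂ, IsIntegral B p := by
    intro p
    set P : Polynomial (MvPolynomial (Fin n) ℂ) :=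
      ∏ g : W, (Polynomial.X - Polynomial.C (substM (mat g) p)) with hP
    have hmonic : P.Monic :=
      Polynomial.monic_prod_of_monic _ _ (fun g _ => Polynomial.monic_X_sub_C _)
    have hroot : Polynomial.eval p P = 0 := by
      rw [hP, Polynomial.eval_prod]
      apply Finset.prod_eq_zero (Finset.mem_univ (1 : W))
      rw [hmat_one, substM_one]
      simp
    have hfix : ∀ h : W, P.map (substM (mat h)).toRingHom = P := by
      intro h
      rw [hP, Polynomial.map_prod]
      simp only [Polynomial.map_sub, Polynomial.map_X, Polynomial.map_C]
      rw [← Equiv.prod_comp (Equiv.mulRight h)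
        (fun g : W => Polynomial.X - Polynomial.C (substM (mat g) p))]
      apply Finset.prod_congr rfl
      intro g _
      simp only [Equiv.coe_mulRight]
      have : (substM (mat h)).toRingHom (substM (mat g) p) = substM (mat (g * h)) p := by
        show substM (mat h) (substM (mat g) p) = _
        rw [substM_substM, hmat_mul]
      rw [this]
    have hcoeff : ∀ k, P.coeff k ∈ B := by
      intro k
      rw [← hrange]
      apply hgen
      intro g hg x
      rw [← eval_substM]
      have h1 : substM ((⟨g, hg⟩ : W) : GL (Fin n) ℂ) (P.coeff k) = P.coeff k := by
        have := hfix ⟨g, hg⟩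
        conv_rhs => rw [← this]
        rw [Polynomial.coeff_map]
        rfl
      rw [show (g : Matrix (Fin n) (Fin n) ℂ) = mat ⟨g, hg⟩ from rfl, h1]
    have hsub : (↑P.coeffs : Set (MvPolynomial (Fin n) ℂ)) ⊆ B.toSubring := by
      intro c hc
      simp only [Finset.coe_sort_coe, Polynomial.coeffs, Finset.coe_image, Set.mem_image] at hc
      obtain ⟨k, -, rfl⟩ := hc
      exact hcoeff k
    refine ⟨P.toSubring B.toSubring hsub, (Polynomial.monic_toSubring _ _ _).mpr hmonic, ?_⟩
    rw [Polynomial.eval₂_eq_eval_map]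
    have halgmap : algebraMap (↥B) (MvPolynomial (Fin n) ℂ) = B.toSubring.subtype :=
      RingHom.ext fun x => rfl
    have hmap : (P.toSubring B.toSubring hsub).map (algebraMap B (MvPolynomial (Fin n) ℂ)) = P := by
      rw [halgmap]
      exact Polynomial.map_toSubring _ _ _
    rw [hmap, hroot]
  haveI : Algebra.IsIntegral B (MvPolynomial (Fin n) ℂ) := ⟨key⟩
  set e : MvPolynomial (Fin n) ℂ ≃ₐ[ℂ] B := AlgEquiv.ofInjective ψ hinj with he
  set my : Ideal (MvPolynomial (Fin n) ℂ) := vanishingIdeal ℂ {y} with hmy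
  set m : Ideal B := Ideal.comap (e.symm : B →ₐ[ℂ] MvPolynomial (Fin n) ℂ).toRingHom my with hm
  haveI : m.IsMaximal := Ideal.comap_isMaximal_of_surjective _ e.symm.surjective
  have hker : RingHom.ker (algebraMap B (MvPolynomial (Fin n) ℂ)) ≤ m := by
    have : RingHom.ker (algebraMap B (MvPolynomial (Fin n) ℂ)) = ⊥ := by
      rw [RingHom.ker_eq_bot_iff_eq_zero]
      intro x hx
      exact Subtype.ext hx
    rw [this]
    exact bot_le
  obtain ⟨Q, Qmax, hQ⟩ := Ideal.exists_ideal_over_maximal_of_isIntegral m hker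
  obtain ⟨v, hv⟩ := (isMaximal_iff_eq_vanishingIdeal_singleton (I := Q)).mp Qmax
  refine ⟨v, fun i => ?_⟩
  have h1 : (X i - C (y i) : MvPolynomial (Fin n) ℂ) ∈ my := by
    rw [hmy, mem_vanishingIdeal_singleton_iff]
    simp
  have h2 : e (X i - C (y i)) ∈ m := by
    rw [hm, Ideal.mem_comap]
    have : (e.symm : B →ₐ[ℂ] MvPolynomial (Fin n) ℂ).toRingHom (e (X i - C (y i)))
        = X i - C (y i) := e.symm_apply_apply _
    rw [this]
    exact h1
  have h3 : algebraMap B (MvPolynomial (Fin n) ℂ) (e (X i - C (y i))) ∈ Q := by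
    rw [← hQ] at h2
    exact h2
  have h4 : (f i - C (y i) : MvPolynomial (Fin n) ℂ) ∈ Q := by
    have hval : algebraMap B (MvPolynomial (Fin n) ℂ) (e (X i - C (y i))) = f i - C (y i) := by
      show ((e (X i - C (y i)) : B) : MvPolynomial (Fin n) ℂ) = _
      rw [he, AlgEquiv.ofInjective_apply]
      rw [map_sub, hψ]
      simp [aeval_X, algebraMap_eq]
    rwa [hval] at h3
  rw [hv, mem_vanishingIdeal_singleton_iff, aeval_eq_eval'] at h4
  rw [map_sub, eval_C] at h4
  exact sub_eq_zero.mp h4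


lemma dne {n : ℕ} (f : Fin n → MvPolynomial (Fin n) ℂ) (d : Fin n → ℕ)
    (hhom : ∀ i, (f i).IsHomogeneous (d i)) (halg : AlgebraicIndependent ℂ f) :
    ∀ i, d i ≠ 0 := by
  intro i h0
  have ht := halg.transcendental i
  rcases eq_or_ne (f i) 0 with h | h
  · exact ht (h ▸ isAlgebraic_zero)
  · have h1 := hhom i
    rw [h0] at h1
    have hC : f i = C (coeff 0 (f i)) := by
      ext m
      rcases eq_or_ne m 0 with rfl | hm
      · simp
      · rw [show (coeff m (C (coeff 0 (f i))) : ℂ) = 0 by simp [coeff_C, Ne.symm hm]]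
        apply h1.coeff_eq_zero
        intro hdeg
        exact hm ((Finsupp.degree_eq_zero_iff m).mp hdeg)
    rw [hC, ← algebraMap_eq] at ht
    exact ht (isAlgebraic_algebraMap (coeff 0 (f i)))



theorem stmt_11 {n : ℕ} [NeZero n] (W : Subgroup (GL (Fin n) ℂ)) (hW : Finite W)
    (f : Fin n → MvPolynomial (Fin n) ℂ) (d : Fin n → ℕ)
    (hhom : ∀ i, (f i).IsHomogeneous (d i))
    (halg : AlgebraicIndependent ℂ f)
    (hinv : ∀ i, ∀ g ∈ W, ∀ v : Fin n → ℂ,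
      MvPolynomial.eval ((g : Matrix (Fin n) (Fin n) ℂ).mulVec v) (f i)
        = MvPolynomial.eval v (f i))
    (hgen : ∀ p : MvPolynomial (Fin n) ℂ,
      (∀ g ∈ W, ∀ v : Fin n → ℂ,
        MvPolynomial.eval ((g : Matrix (Fin n) (Fin n) ℂ).mulVec v) p
          = MvPolynomial.eval v p) →
      p ∈ Algebra.adjoin ℂ (Set.range f)) :
    -- (i) on Z(f₀) ∖ {0}, not all of the fᵢ, i ≠ 0, vanish
    (∀ v : Fin n → ℂ, v ≠ 0 → MvPolynomial.eval v (f 0) = 0 →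
      ∃ i, i ≠ 0 ∧ MvPolynomial.eval v (f i) ≠ 0) ∧
    -- (ii) injectivity on the level of the quotients
    (∀ u v : Fin n → ℂ, u ≠ 0 → v ≠ 0 →
      MvPolynomial.eval u (f 0) = 0 → MvPolynomial.eval v (f 0) = 0 →
      ((∃ t : ℂ, t ≠ 0 ∧ ∀ i, i ≠ 0 → MvPolynomial.eval u (f i)
          = t ^ d i * MvPolynomial.eval v (f i))
        ↔ (∃ g ∈ W, ∃ s : ℂ, s ≠ 0 ∧
            u = s • (g : Matrix (Fin n) (Fin n) ℂ).mulVec v))) ∧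
    -- (iii) surjectivity onto the weighted projective space ℙ(d₂,…,dₙ)
    (∀ x : Fin n → ℂ, (∃ i, i ≠ 0 ∧ x i ≠ 0) →
      ∃ v : Fin n → ℂ, v ≠ 0 ∧ MvPolynomial.eval v (f 0) = 0 ∧ ∃ t : ℂ, t ≠ 0 ∧
        ∀ i, i ≠ 0 → x i = t ^ d i * MvPolynomial.eval v (f i)) := by
  have hd0 : ∀ i, d i ≠ 0 := dne f d hhom halg
  have heval0 : ∀ i, eval (0 : Fin n → ℂ) (f i) = 0 := by
    intro i
    have := eval_smul_hom (hhom i) (0 : ℂ) (0 : Fin n → ℂ)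
    rw [smul_zero, zero_pow (hd0 i), zero_mul] at this
    exact this
  refine ⟨?_, ?_, ?_⟩
  · -- (i)
    intro v hv h0
    by_contra hc
    push_neg at hc
    have hall : ∀ i, eval v (f i) = 0 := by
      intro i
      by_cases hi : i = 0
      · rw [hi]; exact h0
      · exact hc i hi
    have hsep : ∀ s : ℂ, ∃ g : W, s • v
        = ((g : GL (Fin n) ℂ) : Matrix (Fin n) (Fin n) ℂ).mulVec v := by
      intro s
      obtain ⟨g, hg, h⟩ := sep W hW f hgen (s • v) v (by
        intro i
        rw [eval_smul_hom (hhom i), hall i, mul_zero])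
      exact ⟨⟨g, hg⟩, h⟩
    choose gg hgg using hsep
    haveI : Fintype W := Fintype.ofFinite _
    obtain ⟨s, s', hne, heq⟩ := Finite.exists_ne_map_eq_of_infinite gg
    have : s • v = s' • v := by rw [hgg s, hgg s', heq]
    have : (s - s') • v = 0 := by rw [sub_smul, this, sub_self]
    rcases smul_eq_zero.mp this with h | h
    · exact hne (sub_eq_zero.mp h)
    · exact hv h
  · -- (ii)
    intro u v hu hv hu0 hv0
    constructor
    · rintro ⟨t, ht, hti⟩
      have hall : ∀ i, eval u (f i) = eval (t • v) (f i) := by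
        intro i
        rw [eval_smul_hom (hhom i)]
        by_cases hi : i = 0
        · rw [hi, hu0, hv0, mul_zero]
        · rw [hti i hi]
      obtain ⟨g, hg, h⟩ := sep W hW f hgen u (t • v) hall
      exact ⟨g, hg, t, ht, by rw [h, Matrix.mulVec_smul]⟩
    · rintro ⟨g, hg, s, hs, rfl⟩
      refine ⟨s, hs, fun i hi => ?_⟩
      rw [eval_smul_hom (hhom i), hinv i g hg v]
  · -- (iii)
    intro x ⟨i0, hi0, hx0⟩
    set y : Fin n → ℂ := fun i => if i = 0 then 0 else x i with hy
    obtain ⟨v, hv⟩ := surj_eval W hW f halg hgen y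
    refine ⟨v, ?_, ?_, 1, one_ne_zero, ?_⟩
    · rintro rfl
      apply hx0
      have := hv i0
      rw [heval0 i0, hy] at this
      simp only [hi0, if_neg hi0] at this
      exact this.symm
    · rw [hv 0, hy]; simp
    · intro i hi
      rw [one_pow, one_mul, hv i, hy]
      simp [hi]
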